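/- For every p ∈ 𝕋³ and every z < 0 one has Δ_{μ₀}(p;z) > 0; consequently, for every p ∈ 𝕋³ the operator h_{μ₀}(p) has no negative eigenvalues, i.e. there is no z < 0 and nonzero f ∈ L²(𝕋³) with h_{μ₀}(p)f = z·f. -/

import Mathlib

open MeasureTheory Real Filter

noncomputable section

instance : Fact (0 < 2 * Real.pi) := ⟨by positivity⟩

/-- the circle `ℝ/2πℤ`. -/
abbrev 𝕋 : Type := AddCircle (2 * Real.pi)

/-- the three-dimensional torus `𝕋³ = (ℝ/2πℤ)³`, carrying the product of the Haar
(Lebesgue) measures of total mass `2π`; its total mass is `(2π)³`. -/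
abbrev T3 : Type := Fin 3 → 𝕋

/-- the cosine function, lifted to the circle of circumference `2π`. -/
def ccos : 𝕋 → ℝ := Real.cos_periodic.lift

/-- the dispersion function `ε(p) = ∑_{j=1}^3 (1 - cos (m p⁽ʲ⁾))`. -/
def eps (m : ℕ) (p : T3) : ℝ := ∑ j : Fin 3, (1 - ccos (m • p j))

/-- the function `w(p,q) = ε(p) + ε(p+q) + ε(q)`. -/
def w (m : ℕ) (p q : T3) : ℝ := eps m p + eps m (p + q) + eps m q

/-- the representative of a point of `𝕋` in `[-π, π)`. -/
def rep (x : 𝕋) : ℝ := ((AddCircle.equivIco (2 * Real.pi) (-Real.pi)) x : ℝ)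

/-- Euclidean norm of the representative (in `[-π,π)³`) of a point of the torus. -/
def tnorm (p : T3) : ℝ := Real.sqrt (∑ j : Fin 3, rep (p j) ^ 2)

/-- Euclidean inner product of the representatives of two points of the torus. -/
def tinner (p q : T3) : ℝ := ∑ j : Fin 3, rep (p j) * rep (q j)

/-- a function on the torus is real-analytic if it lifts to an analytic
(automatically `2π`-periodic) function on `ℝ³`. -/
def TorusAnalytic (φ : T3 → ℝ) : Prop :=
  ∃ Φ : (Fin 3 → ℝ) → ℝ, (∀ x, AnalyticAt ℝ Φ x) ∧
    ∀ x : Fin 3 → ℝ, Φ x = φ (fun j => (x j : 𝕋))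

/-- evenness of a function on the torus. -/
def TorusEven (φ : T3 → ℝ) : Prop := ∀ p : T3, φ (-p) = φ p

/-- the Fredholm determinant `Δ_μ(p; z) = 1 - μ ∫_{𝕋³} φ(q)²/(w(p,q) - z) dq`. -/
def Delta (m : ℕ) (φ : T3 → ℝ) (μ : ℝ) (p : T3) (z : ℝ) : ℝ :=
  1 - μ * ∫ q : T3, φ q ^ 2 / (w m p q - z)

namespace NoNegAux

instance negInv : Measure.IsNegInvariant (volume : Measure T3) := Measure.pi.isNegInvariant _

instance noAtoms : NullSingletonClass (volume : Measure 𝕋) := by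
  refine ⟨fun x => ?_⟩
  have h := AddCircle.volume_closedBall (T := 2*Real.pi) (x := x) 0
  rw [Metric.closedBall_zero] at h
  rw [h]
  norm_num [Real.pi_nonneg]

lemma coe_surj : Function.Surjective ((↑) : ℝ → 𝕋) := QuotientAddGroup.mk_surjective

lemma ccos_coe (r : ℝ) : ccos (r : 𝕋) = Real.cos r := Real.cos_periodic.lift_coe r

lemma nsmul_coe (m : ℕ) (r : ℝ) : (m • ((r : ℝ) : 𝕋)) = ((m * r : ℝ) : 𝕋) := by
  rw [← nsmul_eq_mul]
  exact (map_nsmul (QuotientAddGroup.mk' (AddSubgroup.zmultiples (2*π))) m r).symm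

lemma ccos_le_one (x : 𝕋) : ccos x ≤ 1 := by
  obtain ⟨r, rfl⟩ := coe_surj x; rw [ccos_coe]; exact Real.cos_le_one r

lemma ccos_neg (x : 𝕋) : ccos (-x) = ccos x := by
  obtain ⟨r, rfl⟩ := coe_surj x
  have : (-(r : 𝕋)) = ((-r : ℝ) : 𝕋) := rfl
  rw [this, ccos_coe, ccos_coe, Real.cos_neg]

lemma eps_nonneg (m : ℕ) (p : T3) : 0 ≤ eps m p :=
  Finset.sum_nonneg fun j _ => by linarith [ccos_le_one (m • p j)]

lemma w_nonneg (m : ℕ) (p q : T3) : 0 ≤ w m p q := by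
  have h1 := eps_nonneg m p; have h2 := eps_nonneg m (p+q); have h3 := eps_nonneg m q
  unfold w; linarith

lemma eq_zero_of_ccos_eq_one {x : 𝕋} (h : ccos x = 1) : x = 0 := by
  obtain ⟨r, rfl⟩ := coe_surj x
  rw [ccos_coe] at h
  obtain ⟨n, hn⟩ := (Real.cos_eq_one_iff r).mp h
  rw [← hn]
  refine (QuotientAddGroup.eq_zero_iff _).mpr ?_
  rw [show ((n:ℝ)) * (2*π) = n • (2*π) by rw [zsmul_eq_mul]]
  exact AddSubgroup.zsmul_mem_zmultiples _ n

lemma continuous_ccos : Continuous ccos := by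
  have h : IsOpenQuotientMap (QuotientAddGroup.mk : ℝ → 𝕋) := QuotientAddGroup.isOpenQuotientMap_mk
  rw [← h.continuous_comp_iff]
  have : ccos ∘ (QuotientAddGroup.mk : ℝ → 𝕋) = Real.cos := funext fun r => ccos_coe r
  rw [this]; exact Real.continuous_cos

lemma continuous_eps (m : ℕ) : Continuous (eps m) := by
  unfold eps
  refine continuous_finset_sum _ fun j _ => Continuous.sub continuous_const (continuous_ccos.comp ?_)
  exact (continuous_const_smul m).comp (continuous_apply j)

lemma continuous_w (m : ℕ) (p : T3) : Continuous (fun q => w m p q) := by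
  unfold w
  exact (continuous_const.add ((continuous_eps m).comp (continuous_const.add continuous_id))).add
    (continuous_eps m)

lemma continuous_of_torusAnalytic {φ : T3 → ℝ} (h : TorusAnalytic φ) : Continuous φ := by
  obtain ⟨Φ, hΦa, hΦ⟩ := h
  have hq : IsOpenQuotientMap (Pi.map (fun _ : Fin 3 => (QuotientAddGroup.mk : ℝ → 𝕋))) :=
    IsOpenQuotientMap.piMap fun _ => QuotientAddGroup.isOpenQuotientMap_mk
  rw [← hq.continuous_comp_iff]
  have : φ ∘ (Pi.map fun _ : Fin 3 => (QuotientAddGroup.mk : ℝ → 𝕋)) = Φ :=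
    funext fun x => (hΦ x).symm
  rw [this]
  exact continuous_iff_continuousAt.mpr fun x => (hΦa x).continuousAt

lemma cint {g : T3 → ℝ} (hg : Continuous g) : Integrable g volume :=
  hg.integrable_of_hasCompactSupport ((isClosed_tsupport g).isCompact)

lemma eps_apply (m : ℕ) (P : Fin 3 → ℝ) :
    eps m (fun j => ((P j : ℝ) : 𝕋)) = ∑ j, (1 - Real.cos (m * P j)) := by
  unfold eps
  exact Finset.sum_congr rfl fun j _ => by rw [nsmul_coe, ccos_coe]

lemma S_finite (m : ℕ) (hm : 0 < m) : Set.Finite {x : 𝕋 | m • x = 0} := by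
  refine (Set.finite_range (fun k : Fin m => (((2*π*k/m : ℝ)) : 𝕋))).subset ?_
  rintro x hx
  obtain ⟨r, rfl⟩ := coe_surj x
  have hx0 : ((m * r : ℝ) : 𝕋) = 0 := by rw [← nsmul_coe]; exact hx
  obtain ⟨n, hn⟩ := AddSubgroup.mem_zmultiples_iff.mp ((QuotientAddGroup.eq_zero_iff _).mp hx0)
  rw [zsmul_eq_mul] at hn
  have hmR : (0:ℝ) < m := by exact_mod_cast hm
  have hk : ((n % m).toNat : ℤ) = n % m := Int.toNat_of_nonneg (Int.emod_nonneg n (by exact_mod_cast hm.ne'))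
  have hklt : (n % m).toNat < m := by
    have := Int.emod_lt_of_pos n (b := m) (by exact_mod_cast hm)
    omega
  refine ⟨⟨(n % m).toNat, hklt⟩, ?_⟩
  have hdvd : n = m * (n / m) + n % m := (Int.mul_ediv_add_emod n m).symm
  refine (QuotientAddGroup.eq_iff_sub_mem).mpr ?_
  rw [AddSubgroup.mem_zmultiples_iff]
  refine ⟨-(n / m), ?_⟩
  have hdvdR : (n:ℝ) = (m:ℝ)*((n/m : ℤ):ℝ) + ((n%m : ℤ):ℝ) := by exact_mod_cast hdvd
  have hmne : (m:ℝ) ≠ 0 := hmR.ne'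
  rw [zsmul_eq_mul]
  push_cast [hk]
  field_simp
  have hkR : (((n % (m:ℤ)).toNat : ℕ) : ℝ) = ((n % (m:ℤ) : ℤ) : ℝ) := by exact_mod_cast hk
  linear_combination (2*π)*hdvdR - hn - 2*π*hkR

lemma eps_ae_ne (m : ℕ) (hm : 0 < m) : ∀ᵐ q : T3, eps m q ≠ 0 := by
  have hsub : {q : T3 | eps m q = 0} ⊆ Set.univ.pi (fun _ : Fin 3 => {x : 𝕋 | m • x = 0}) := by
    intro q hq j _
    have hterm : ∀ j ∈ Finset.univ, (0:ℝ) ≤ 1 - ccos (m • q j) :=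
      fun j _ => by linarith [ccos_le_one (m • q j)]
    have := (Finset.sum_eq_zero_iff_of_nonneg hterm).mp hq j (Finset.mem_univ j)
    have hcc : ccos (m • q j) = 1 := by linarith
    exact eq_zero_of_ccos_eq_one hcc
  have hS : volume {x : 𝕋 | m • x = 0} = 0 := (S_finite m hm).measure_zero _
  have hpi : volume (Set.univ.pi (fun _ : Fin 3 => {x : 𝕋 | m • x = 0})) = 0 := by
    rw [volume_pi_pi]
    simp [hS]
  rw [Filter.eventually_iff, mem_ae_iff]
  refine measure_mono_null ?_ hpi
  intro q hq
  exact hsub (by simpa using hq)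

lemma pair (s1 t1 d1 s2 t2 d2 : ℝ) (hs1 : 0 ≤ s1) (hs2 : 0 ≤ s2) (ht1 : 0 ≤ t1) (ht2 : 0 ≤ t2)
    (h1 : d1^2 = s1*t1) (h2 : d2^2 = s2*t2) : 2*(d1*d2) ≤ s1*t2 + s2*t1 := by
  have key : (d1*d2)^2 = (s1*t2)*(s2*t1) := by rw [mul_pow, h1, h2]; ring
  have hu : 0 ≤ s1*t2 := mul_nonneg hs1 ht2
  have hv : 0 ≤ s2*t1 := mul_nonneg hs2 ht1
  nlinarith [sq_nonneg (s1*t2 - s2*t1), sq_nonneg (s1*t2 + s2*t1), key, mul_nonneg hu hv,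
    sq_nonneg (s1*t2 + s2*t1 - 2*(d1*d2)), sq_nonneg (s1*t2 + s2*t1 + 2*(d1*d2))]

lemma CS (s t d : Fin 3 → ℝ) (hs : ∀ i, 0 ≤ s i) (ht : ∀ i, 0 ≤ t i)
    (hd : ∀ i, (d i)^2 = s i * t i) :
    (∑ i, d i)^2 ≤ (∑ i, s i) * (∑ i, t i) := by
  simp only [Fin.sum_univ_three]
  have p01 := pair _ _ _ _ _ _ (hs 0) (hs 1) (ht 0) (ht 1) (hd 0) (hd 1)
  have p02 := pair _ _ _ _ _ _ (hs 0) (hs 2) (ht 0) (ht 2) (hd 0) (hd 2)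
  have p12 := pair _ _ _ _ _ _ (hs 1) (hs 2) (ht 1) (ht 2) (hd 1) (hd 2)
  nlinarith [hd 0, hd 1, hd 2]

lemma core (a b b' c s t d ζ : ℝ) (ha : 0 ≤ a) (hb : 0 ≤ b) (hb' : 0 ≤ b') (hc : 0 ≤ c)
    (hζ : 0 < ζ) (hs : 0 ≤ s)
    (hA : a + b + c = 2*c + s + d) (hB : a + b' + c = 2*c + s - d)
    (hd2 : d^2 ≤ s*t) (htc : t ≤ 2*c) :
    1/(a+b+c+ζ) + 1/(a+b'+c+ζ) ≤ 2/(2*c+ζ) := by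
  have hApos : 0 < a+b+c+ζ := by linarith
  have hBpos : 0 < a+b'+c+ζ := by linarith
  have hCpos : 0 < 2*c+ζ := by linarith
  rw [div_add_div _ _ (ne_of_gt hApos) (ne_of_gt hBpos), div_le_div_iff₀ (by positivity) hCpos]
  have hst : d^2 ≤ s*(2*c) + s*s := by nlinarith [mul_le_mul_of_nonneg_left htc hs]
  nlinarith [hst, mul_nonneg hs hζ.le]

lemma core_trig (x y : Fin 3 → ℝ) {ζ : ℝ} (hζ : 0 < ζ) :
    1/((∑ j, (1 - Real.cos (x j))) + (∑ j, (1 - Real.cos (x j + y j))) + (∑ j, (1 - Real.cos (y j))) + ζ)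
    + 1/((∑ j, (1 - Real.cos (x j))) + (∑ j, (1 - Real.cos (x j - y j))) + (∑ j, (1 - Real.cos (y j))) + ζ)
    ≤ 2/(2*(∑ j, (1 - Real.cos (y j))) + ζ) := by
  have h1 : ∀ r : ℝ, 0 ≤ 1 - Real.cos r := fun r => by linarith [Real.cos_le_one r]
  have h2 : ∀ r : ℝ, 0 ≤ 1 + Real.cos r := fun r => by linarith [Real.neg_one_le_cos r]
  refine core _ _ _ _ (∑ j, (1 - Real.cos (x j))*(1 + Real.cos (y j)))
      (∑ j, (1 + Real.cos (x j))*(1 - Real.cos (y j)))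
      (∑ j, Real.sin (x j) * Real.sin (y j)) ζ
      (Finset.sum_nonneg fun j _ => h1 _) (Finset.sum_nonneg fun j _ => h1 _)
      (Finset.sum_nonneg fun j _ => h1 _) (Finset.sum_nonneg fun j _ => h1 _) hζ
      (Finset.sum_nonneg fun j _ => mul_nonneg (h1 _) (h2 _)) ?_ ?_ ?_ ?_
  · simp only [Fin.sum_univ_three, Real.cos_add]; ring
  · simp only [Fin.sum_univ_three, Real.cos_sub]; ring
  · refine CS _ _ _ (fun i => mul_nonneg (h1 _) (h2 _)) (fun i => mul_nonneg (h2 _) (h1 _))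
      (fun i => ?_)
    rw [mul_pow, Real.sin_sq, Real.sin_sq]; ring
  · calc (∑ j, (1 + Real.cos (x j))*(1 - Real.cos (y j)))
        ≤ ∑ j, 2*(1 - Real.cos (y j)) :=
          Finset.sum_le_sum fun j _ => by
            nlinarith [Real.cos_le_one (x j), Real.cos_le_one (y j), Real.neg_one_le_cos (y j)]
      _ = 2*(∑ j, (1 - Real.cos (y j))) := by rw [Finset.mul_sum]

lemma key (m : ℕ) {φ : T3 → ℝ} (hφe : TorusEven φ) (p q : T3) {ζ : ℝ} (hζ : 0 < ζ) :
    φ q ^ 2 / (w m p q + ζ) + φ (-q) ^ 2 / (w m p (-q) + ζ)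
      ≤ 2 * (φ q ^ 2 / (2 * eps m q + ζ)) := by
  rw [hφe q]
  obtain ⟨P, rfl⟩ : ∃ P : Fin 3 → ℝ, p = fun j => ((P j : ℝ) : 𝕋) :=
    ⟨fun j => (coe_surj (p j)).choose, funext fun j => ((coe_surj (p j)).choose_spec).symm⟩
  obtain ⟨Q, rfl⟩ : ∃ Q : Fin 3 → ℝ, q = fun j => ((Q j : ℝ) : 𝕋) :=
    ⟨fun j => (coe_surj (q j)).choose, funext fun j => ((coe_surj (q j)).choose_spec).symm⟩
  have hadd : ((fun j => ((P j : ℝ) : 𝕋)) + fun j => ((Q j : ℝ) : 𝕋)) = fun j => ((P j + Q j : ℝ) : 𝕋) := by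
    funext j; rfl
  have hneg : (-fun j => ((Q j : ℝ) : 𝕋)) = fun j => ((-Q j : ℝ) : 𝕋) := by
    funext j; rfl
  have hsub : ((fun j => ((P j : ℝ) : 𝕋)) + fun j => ((-Q j : ℝ) : 𝕋)) = fun j => ((P j - Q j : ℝ) : 𝕋) := by
    funext j
    rw [show (P j - Q j : ℝ) = P j + (- Q j) by ring]; rfl
  have hc := core_trig (fun j => m * P j) (fun j => m * Q j) hζ
  have h1 : w m (fun j => ((P j : ℝ) : 𝕋)) (fun j => ((Q j : ℝ) : 𝕋)) + ζ
      = (∑ j, (1 - Real.cos (m * P j))) + (∑ j, (1 - Real.cos (m * P j + m * Q j)))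
        + (∑ j, (1 - Real.cos (m * Q j))) + ζ := by
    unfold w
    rw [hadd, eps_apply, eps_apply, eps_apply]
    simp only [mul_add]
  have h2 : w m (fun j => ((P j : ℝ) : 𝕋)) (-fun j => ((Q j : ℝ) : 𝕋)) + ζ
      = (∑ j, (1 - Real.cos (m * P j))) + (∑ j, (1 - Real.cos (m * P j - m * Q j)))
        + (∑ j, (1 - Real.cos (m * Q j))) + ζ := by
    unfold w
    rw [hneg, hsub, eps_apply, eps_apply, eps_apply]
    simp only [mul_sub]
    congr 2
    refine Finset.sum_congr rfl fun j _ => ?_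
    rw [show (m:ℝ) * (-Q j) = -((m:ℝ) * Q j) by ring, Real.cos_neg]
  have h3 : 2 * eps m (fun j => ((Q j : ℝ) : 𝕋)) + ζ = 2*(∑ j, (1 - Real.cos (m * Q j))) + ζ := by
    rw [eps_apply]
  rw [h1, h2, h3]
  have hmul := mul_le_mul_of_nonneg_left hc (sq_nonneg (φ fun j => ((Q j : ℝ) : 𝕋)))
  calc _ = (φ fun j => ((Q j : ℝ) : 𝕋))^2 * (1/((∑ j, (1 - Real.cos (m * P j))) + (∑ j, (1 - Real.cos (m * P j + m * Q j))) + (∑ j, (1 - Real.cos (m * Q j))) + ζ)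
        + 1/((∑ j, (1 - Real.cos (m * P j))) + (∑ j, (1 - Real.cos (m * P j - m * Q j))) + (∑ j, (1 - Real.cos (m * Q j))) + ζ)) := by
        rw [mul_add, mul_one_div, mul_one_div]
    _ ≤ (φ fun j => ((Q j : ℝ) : 𝕋))^2 * (2/(2*(∑ j, (1 - Real.cos (m * Q j))) + ζ)) := hmul
    _ = 2 * ((φ fun j => ((Q j : ℝ) : 𝕋))^2 / (2*(∑ j, (1 - Real.cos (m * Q j))) + ζ)) := by
        ring

end NoNegAux

open NoNegAux

/-- `Δ_{μ₀}(p;z) > 0` for every `p` and every `z < 0`; consequently the Friedrichs model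
`h_{μ₀}(p)` has no negative eigenvalue: there is no `z < 0` and nonzero `f ∈ L²(𝕋³)`
with `h_{μ₀}(p)f = z·f`. -/
theorem no_negative_eigenvalues (m : ℕ) (hm : 3 ≤ m)
    (φ : T3 → ℝ) (hφa : TorusAnalytic φ) (hφe : TorusEven φ) (hφ0 : φ ≠ 0)
    (hint : Integrable (fun s : T3 => φ s ^ 2 / eps m s) volume)
    (hpos : 0 < ∫ s : T3, φ s ^ 2 / eps m s)
    (μ₀ : ℝ) (hμ₀ : μ₀ = 2 * (∫ s : T3, φ s ^ 2 / eps m s)⁻¹) :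
    (∀ p : T3, ∀ z : ℝ, z < 0 → 0 < Delta m φ μ₀ p z) ∧
    (∀ p : T3, ¬ ∃ z : ℝ, z < 0 ∧ ∃ f : Lp ℝ 2 (volume : Measure T3), f ≠ 0 ∧
      ∀ᵐ q : T3, w m p q * f q - μ₀ * φ q * (∫ s : T3, φ s * f s) = z * f q) := by
  have hφc : Continuous φ := continuous_of_torusAnalytic hφa
  have hm0 : 0 < m := by omega
  set I := ∫ s : T3, φ s ^ 2 / eps m s with hI
  have hIpos : 0 < I := hpos
  have hμpos : 0 < μ₀ := by rw [hμ₀]; positivity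
  have heps_ae : ∀ᵐ q : T3, eps m q ≠ 0 := eps_ae_ne m hm0
  have hhalf_fun : (fun q : T3 => φ q ^ 2 / (2 * eps m q)) = fun q => (φ q ^ 2 / eps m q) / 2 := by
    funext q
    rw [div_div, mul_comm (eps m q) 2]
  have hint2 : Integrable (fun q : T3 => φ q ^ 2 / (2 * eps m q)) volume := by
    rw [hhalf_fun]; exact hint.div_const 2
  have hhalf : ∫ q : T3, φ q ^ 2 / (2 * eps m q) = I / 2 := by
    rw [hhalf_fun, integral_div]
  have hsupport : 0 < volume (Function.support fun s : T3 => φ s ^ 2 / eps m s) := by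
    refine (integral_pos_iff_support_of_nonneg_ae ?_ hint).mp hpos
    exact Filter.Eventually.of_forall fun s => div_nonneg (sq_nonneg _) (eps_nonneg m s)
  have part1 : ∀ p : T3, ∀ z : ℝ, z < 0 → 0 < Delta m φ μ₀ p z := by
    intro p z hz
    set ζ : ℝ := -z with hζdef
    have hζ : 0 < ζ := by rw [hζdef]; linarith
    have hwz : ∀ q, w m p q - z = w m p q + ζ := fun q => by rw [hζdef]; ring
    have hgcont : Continuous (fun q : T3 => φ q ^ 2 / (w m p q + ζ)) := by
      refine (hφc.pow 2).div ((continuous_w m p).add continuous_const) fun q => ?_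
      have := w_nonneg m p q; positivity
    have hg_int : Integrable (fun q : T3 => φ q ^ 2 / (w m p q + ζ)) volume := cint hgcont
    have hgneg_int : Integrable (fun q : T3 => φ (-q) ^ 2 / (w m p (-q) + ζ)) volume :=
      cint (hgcont.comp continuous_neg)
    have hh2cont : Continuous (fun q : T3 => φ q ^ 2 / (2 * eps m q + ζ)) := by
      refine (hφc.pow 2).div ((continuous_const.mul (continuous_eps m)).add continuous_const)
        fun q => ?_
      have := eps_nonneg m q; positivity
    have hh2int : Integrable (fun q : T3 => φ q ^ 2 / (2 * eps m q + ζ)) volume := cint hh2cont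
    have hneg : (∫ q : T3, φ (-q) ^ 2 / (w m p (-q) + ζ)) = ∫ q : T3, φ q ^ 2 / (w m p q + ζ) :=
      integral_neg_eq_self (fun q : T3 => φ q ^ 2 / (w m p q + ζ)) volume
    have hΛ : (∫ q : T3, φ q ^ 2 / (w m p q + ζ)) ≤ ∫ q : T3, φ q ^ 2 / (2 * eps m q + ζ) := by
      have hsum : (∫ q : T3, (φ q ^ 2 / (w m p q + ζ) + φ (-q) ^ 2 / (w m p (-q) + ζ)))
          = 2 * ∫ q : T3, φ q ^ 2 / (w m p q + ζ) := by
        rw [integral_add hg_int hgneg_int, hneg]; ring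
      have hmono : (∫ q : T3, (φ q ^ 2 / (w m p q + ζ) + φ (-q) ^ 2 / (w m p (-q) + ζ)))
          ≤ ∫ q : T3, 2 * (φ q ^ 2 / (2 * eps m q + ζ)) := by
        refine integral_mono (hg_int.add hgneg_int) (hh2int.const_mul 2) fun q => ?_
        exact key m hφe p q hζ
      rw [integral_const_mul] at hmono
      linarith
    have hstrict : (∫ q : T3, φ q ^ 2 / (2 * eps m q + ζ)) < ∫ q : T3, φ q ^ 2 / (2 * eps m q) := by
      have hFint : Integrable (fun q : T3 => φ q ^ 2 / (2 * eps m q) - φ q ^ 2 / (2 * eps m q + ζ))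
          volume := hint2.sub hh2int
      have hF0 : 0 ≤ᵐ[volume]
          fun q : T3 => φ q ^ 2 / (2 * eps m q) - φ q ^ 2 / (2 * eps m q + ζ) := by
        filter_upwards [heps_ae] with q hq
        have he : 0 < eps m q := lt_of_le_of_ne (eps_nonneg m q) (Ne.symm hq)
        have hle : φ q ^ 2 / (2 * eps m q + ζ) ≤ φ q ^ 2 / (2 * eps m q) :=
          div_le_div_of_nonneg_left (sq_nonneg _) (by linarith) (by linarith)
        simp only [Pi.zero_apply]
        linarith
      have hFpos : 0 < ∫ q : T3, (φ q ^ 2 / (2 * eps m q) - φ q ^ 2 / (2 * eps m q + ζ)) := by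
        rw [integral_pos_iff_support_of_nonneg_ae hF0 hFint]
        refine lt_of_lt_of_le hsupport (measure_mono ?_)
        intro s hs
        have hs' : φ s ^ 2 / eps m s ≠ 0 := Function.mem_support.mp hs
        have hene : eps m s ≠ 0 := by intro h; exact hs' (by simp [h])
        have hpne : φ s ^ 2 ≠ 0 := by intro h; exact hs' (by simp [h])
        have he : 0 < eps m s := lt_of_le_of_ne (eps_nonneg m s) (Ne.symm hene)
        have hp2 : 0 < φ s ^ 2 := lt_of_le_of_ne (sq_nonneg _) (Ne.symm hpne)
        have hlt : φ s ^ 2 / (2 * eps m s + ζ) < φ s ^ 2 / (2 * eps m s) :=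
          div_lt_div_of_pos_left hp2 (by linarith) (by linarith)
        exact ne_of_gt (by linarith)
      have hdiff := integral_sub hint2 hh2int
      rw [hdiff] at hFpos
      linarith
    have hfin : (∫ q : T3, φ q ^ 2 / (w m p q - z)) < I / 2 := by
      simp only [hwz]
      calc (∫ q : T3, φ q ^ 2 / (w m p q + ζ))
          ≤ ∫ q : T3, φ q ^ 2 / (2 * eps m q + ζ) := hΛ
        _ < ∫ q : T3, φ q ^ 2 / (2 * eps m q) := hstrict
        _ = I / 2 := hhalf
    have hone : μ₀ * (I / 2) = 1 := by
      rw [hμ₀]; field_simp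
    unfold Delta
    nlinarith [mul_lt_mul_of_pos_left hfin hμpos]
  refine ⟨part1, ?_⟩
  rintro p ⟨z, hz, f, hf0, hev⟩
  set c := ∫ s : T3, φ s * f s with hcdef
  have hwz : ∀ q, 0 < w m p q - z := fun q => by have := w_nonneg m p q; linarith
  have hae : ∀ᵐ q : T3, (f : T3 → ℝ) q = μ₀ * φ q * c / (w m p q - z) := by
    filter_upwards [hev] with q hq
    rw [eq_div_iff (hwz q).ne']
    linear_combination hq
  by_cases hc0 : c = 0
  · have hzero : (f : T3 → ℝ) =ᵐ[volume] 0 := by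
      filter_upwards [hae] with q hq
      simp [hq, hc0]
    exact hf0 (Lp.ext (hzero.trans (Lp.coeFn_zero ℝ 2 (volume : Measure T3)).symm))
  · have h1 : c = μ₀ * c * ∫ q : T3, φ q ^ 2 / (w m p q - z) := by
      calc c = ∫ s : T3, φ s * f s := hcdef
        _ = ∫ s : T3, μ₀ * c * (φ s ^ 2 / (w m p s - z)) := by
            refine integral_congr_ae ?_
            filter_upwards [hae] with q hq
            rw [hq]; ring
        _ = μ₀ * c * ∫ q : T3, φ q ^ 2 / (w m p q - z) := integral_const_mul _ _
    have hΔ := part1 p z hz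
    unfold Delta at hΔ
    have hone : μ₀ * ∫ q : T3, φ q ^ 2 / (w m p q - z) = 1 := by
      have h2 : c * (μ₀ * ∫ q : T3, φ q ^ 2 / (w m p q - z)) = c * 1 := by
        linear_combination -h1
      exact (mul_left_cancel₀ hc0 h2)
    linarith

end
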